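/- The 6×6 real matrix M = [[−5,0,0,0,0,5],[0,−3,0,0,3,0],[0,0,−1,1,0,0],[0,0,−1,1,0,0],[0,−3,0,0,3,0],[−5,0,0,0,0,5]] satisfies M² = 0 and rank(M) = 3; hence its only eigenvalue is 0 with geometric multiplicity 3 and Jordan type 2+2+2. -/

import Mathlib

open Matrix

noncomputable def M15 : Matrix (Fin 6) (Fin 6) ℝ :=
  !![-5, 0, 0, 0, 0, 5;
     0, -3, 0, 0, 3, 0;
     0, 0, -1, 1, 0, 0;
     0, 0, -1, 1, 0, 0;
     0, -3, 0, 0, 3, 0;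
     -5, 0, 0, 0, 0, 5]

private lemma cA15 (x : ℝ) (u : Fin 5 → ℝ) : vecCons x u 5 = u 4 := rfl
private lemma cB15 (x : ℝ) (u : Fin 4 → ℝ) : vecCons x u 4 = u 3 := rfl
private lemma cC15 (x : ℝ) (u : Fin 3 → ℝ) : vecCons x u 3 = u 2 := rfl
private lemma cD15 (x : ℝ) (u : Fin 2 → ℝ) : vecCons x u 2 = u 1 := rfl
private lemma cE15 (x : ℝ) (u : Fin 1 → ℝ) : vecCons x u 1 = u 0 := rfl

lemma M15_sq : M15 ^ 2 = 0 := by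
  ext i j
  fin_cases i <;> fin_cases j <;>
    norm_num [M15, pow_two, Matrix.mul_apply, Fin.sum_univ_six, cA15, cB15, cC15, cD15, cE15,
      Matrix.vecHead, Matrix.vecTail]
    <;> simp only [Matrix.cons_val_two, Matrix.cons_val_three, Matrix.cons_val_four, Matrix.head_cons, Matrix.tail_cons] <;> norm_num

private noncomputable def v15 : Fin 3 → (Fin 6 → ℝ) :=
  ![![-5, 0, 0, 0, 0, -5], ![0, -3, 0, 0, -3, 0], ![0, 0, -1, -1, 0, 0]]

lemma v15_li : LinearIndependent ℝ v15 := by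
  rw [Fintype.linearIndependent_iff]
  intro g hg
  have h0 := congrFun hg 0
  have h1 := congrFun hg 1
  have h2 := congrFun hg 2
  simp [v15, Fin.sum_univ_three, cA15, cB15, cC15, cD15, cE15, Matrix.vecHead,
    Matrix.vecTail] at h0 h1 h2
  intro i
  fin_cases i <;> simpa using by linarith

lemma v15_mem (i : Fin 3) : v15 i ∈ LinearMap.range M15.mulVecLin := by
  fin_cases i
  · exact ⟨Pi.single 0 1, by
      ext j; fin_cases j <;>
        norm_num [M15, v15, mulVec, dotProduct, Fin.sum_univ_six, cA15, cB15, cC15, cD15, cE15,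
          Matrix.vecHead, Matrix.vecTail, Pi.single_apply]⟩
  · exact ⟨Pi.single 1 1, by
      ext j; fin_cases j <;>
        norm_num [M15, v15, mulVec, dotProduct, Fin.sum_univ_six, cA15, cB15, cC15, cD15, cE15,
          Matrix.vecHead, Matrix.vecTail, Pi.single_apply]⟩
  · exact ⟨Pi.single 2 1, by
      ext j; fin_cases j <;>
        norm_num [M15, v15, mulVec, dotProduct, Fin.sum_univ_six, cA15, cB15, cC15, cD15, cE15,
          Matrix.vecHead, Matrix.vecTail, Pi.single_apply]
          <;> simp only [Matrix.cons_val_two, Matrix.cons_val_three, Matrix.cons_val_four, Matrix.head_cons, Matrix.tail_cons] <;> norm_num⟩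

lemma rank_ge15 : 3 ≤ M15.rank := by
  have li : LinearIndependent ℝ (fun i : Fin 3 => (⟨v15 i, v15_mem i⟩ :
      LinearMap.range M15.mulVecLin)) := by
    apply LinearIndependent.of_comp (LinearMap.range M15.mulVecLin).subtype
    exact v15_li
  simpa [Matrix.rank] using li.fintype_card_le_finrank

lemma range_le_ker15 : LinearMap.range M15.mulVecLin ≤ LinearMap.ker M15.mulVecLin := by
  rintro x ⟨y, rfl⟩
  have h : M15.mulVecLin (M15.mulVecLin y) = (M15 * M15).mulVecLin y := by
    rw [Matrix.mulVecLin_mul]; rfl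
  simp only [LinearMap.mem_ker, h]
  rw [show M15 * M15 = 0 by simpa [pow_two] using M15_sq]
  simp

lemma rank_nullity15 : M15.rank + Module.finrank ℝ ↥(LinearMap.ker M15.mulVecLin) = 6 := by
  have := LinearMap.finrank_range_add_finrank_ker M15.mulVecLin
  simpa [Matrix.rank] using this

lemma rank_eq15 : M15.rank = 3 ∧ Module.finrank ℝ ↥(LinearMap.ker M15.mulVecLin) = 3 := by
  have h1 := rank_ge15
  have h2 := rank_nullity15
  have h3 : M15.rank ≤ Module.finrank ℝ ↥(LinearMap.ker M15.mulVecLin) :=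
    Submodule.finrank_mono range_le_ker15
  omega

theorem stmt_15 :
    M15 ^ 2 = 0 ∧ M15.rank = 3 ∧
    (∀ μ : ℝ, Module.End.HasEigenvalue M15.mulVecLin μ → μ = 0) ∧
    Module.finrank ℝ ↥(LinearMap.ker M15.mulVecLin) = 3 := by
  refine ⟨M15_sq, rank_eq15.1, ?_, rank_eq15.2⟩
  intro μ hμ
  obtain ⟨v, hv⟩ := hμ.exists_hasEigenvector
  have hvv := hv.apply_eq_smul
  have h2 : M15.mulVecLin (M15.mulVecLin v) = (μ * μ) • v := by
    rw [hvv, LinearMap.map_smul, hvv, smul_smul]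
  have h0 : M15.mulVecLin (M15.mulVecLin v) = 0 := range_le_ker15 ⟨v, rfl⟩
  rw [h0] at h2
  have hμ0 : μ * μ = 0 := by
    by_contra h
    exact hv.2 (by simpa [h] using smul_eq_zero.mp h2.symm)
  nlinarith
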